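/- Let λ ∈ ℂ ∪ {∞}. Define derivations d_Ab and d_λ^A of W_A(λ) by: d_Ab(L_n) = 0, d_Ab(A_n) = A_n for all n; and, if λ ≠ 0, d_λ^A(L_n) = n·A_n, d_λ^A(A_n) = 0, while if λ = 0, d_0^A(L_n) = n²·A_n, d_0^A(A_n) = 0. Then the space of derivations of W_A(λ) is the internal direct sum Der(W_A(λ)) = Inn(W_A(λ)) ⊕ ℂ·d_Ab ⊕ ℂ·d_λ^A, where Inn(W_A(λ)) denotes the space of inner derivations ad_x, x ∈ W_A(λ). Consequently, the quotient Der(W_A(λ))/Inn(W_A(λ)) is two-dimensional. -/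

import Mathlib

/-- The coefficient `n(n+1)λ`, where `λ = ∞` (encoded by `none`) gives `n²`. -/
def lamTerm (lam : Option ℂ) (n : ℤ) : ℂ :=
  match lam with
  | some l => (n : ℂ) * ((n : ℂ) + 1) * l
  | none => (n : ℂ) ^ 2

/-- The submodule of inner derivations `ad_x : y ↦ ⁅x, y⁆` inside the module of all
derivations of a complex Lie algebra. -/
noncomputable def innerDerivations (L : Type) [LieRing L] [LieAlgebra ℂ L] :
    Submodule ℂ (LieDerivation ℂ L L) where
  carrier := {D | ∃ x : L, ∀ y : L, D y = ⁅x, y⁆}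
  add_mem' := by
    rintro D₁ D₂ ⟨x₁, h₁⟩ ⟨x₂, h₂⟩
    exact ⟨x₁ + x₂, fun y => by
      simp [LieDerivation.add_apply, h₁ y, h₂ y, add_lie]⟩
  zero_mem' := ⟨0, fun y => by simp⟩
  smul_mem' := by
    rintro c D ⟨x, h⟩
    exact ⟨c • x, fun y => by simp [LieDerivation.smul_apply, h y, smul_lie]⟩

section Infra

variable {lam : Option ℂ} {L : Type} [LieRing L] [LieAlgebra ℂ L] (b : Module.Basis (ℤ ⊕ ℤ) ℂ L)

lemma lamTerm_zero : lamTerm lam 0 = 0 := by cases lam <;> simp [lamTerm]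

lemma finset_sum_lie {α : Type*} (s : Finset α) (f : α → L) (y : L) :
    ⁅∑ i ∈ s, f i, y⁆ = ∑ i ∈ s, ⁅f i, y⁆ :=
  map_sum (AddMonoidHom.mk' (fun x : L => ⁅x, y⁆) (fun a c => add_lie a c y)) f s

lemma repr_lie_apply (x y : L) (k : ℤ ⊕ ℤ) :
    b.repr ⁅x, y⁆ k = (b.repr x).sum fun i c => c * b.repr ⁅b i, y⁆ k := by
  conv_lhs => rw [← b.linearCombination_repr x, Finsupp.linearCombination_apply, Finsupp.sum,
    finset_sum_lie]
  rw [map_sum, Finset.sum_apply', Finsupp.sum]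
  refine Finset.sum_congr rfl fun i _ => ?_
  rw [smul_lie, map_smul, Finsupp.smul_apply, smul_eq_mul]

end Infra

section Repr

set_option linter.unusedSectionVars false

variable {lam : Option ℂ} {L : Type} [LieRing L] [LieAlgebra ℂ L] {b : Module.Basis (ℤ ⊕ ℤ) ℂ L}
variable (hLL : ∀ n m : ℤ,
      ⁅b (Sum.inl n), b (Sum.inl m)⁆ = ((m : ℂ) - (n : ℂ)) • b (Sum.inl (n + m)))
variable (hLA : ∀ n m : ℤ,
      ⁅b (Sum.inl n), b (Sum.inr m)⁆ =
        ((n : ℂ) + (m : ℂ) + (if m = 0 then lamTerm lam n else 0)) • b (Sum.inr (n + m)))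
variable (hAA : ∀ n m : ℤ, ⁅b (Sum.inr n), b (Sum.inr m)⁆ = 0)

include hLL hLA in
lemma reprXL_L (x : L) (m k : ℤ) :
    b.repr ⁅x, b (Sum.inl m)⁆ (Sum.inl k)
      = (2 * (m : ℂ) - k) * b.repr x (Sum.inl (k - m)) := by
  rw [repr_lie_apply]
  rw [Finsupp.sum_congr (g2 := fun i c => if i = Sum.inl (k - m) then c * (2*(m:ℂ) - k) else 0)]
  · rw [Finsupp.sum_ite_eq']
    by_cases h : Sum.inl (k - m) ∈ (b.repr x).support
    · rw [if_pos h, mul_comm]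
    · rw [if_neg h]
      rw [Finsupp.notMem_support_iff.mp h, mul_zero]
  · intro i _
    rcases i with n | n
    · rw [hLL n m, map_smul, Finsupp.smul_apply, b.repr_self, Finsupp.single_apply]
      simp only [Sum.inl.injEq]
      by_cases h : n = k - m
      · subst h; rw [if_pos (by omega), if_pos rfl]
        push_cast; rw [smul_eq_mul]; ring
      · rw [if_neg (by omega), if_neg h]
        simp
    · rw [← lie_skew, hLA m n, map_neg, map_smul, Finsupp.neg_apply, Finsupp.smul_apply,
        b.repr_self, Finsupp.single_apply]
      simp

include hLL hLA in
lemma reprXL_A (x : L) (m k : ℤ) :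
    b.repr ⁅x, b (Sum.inl m)⁆ (Sum.inr k)
      = -((k : ℂ) + if k = m then lamTerm lam m else 0) * b.repr x (Sum.inr (k - m)) := by
  rw [repr_lie_apply]
  rw [Finsupp.sum_congr (g2 := fun i c => if i = Sum.inr (k - m) then
    c * (-((k : ℂ) + if k = m then lamTerm lam m else 0)) else 0)]
  · rw [Finsupp.sum_ite_eq']
    by_cases h : Sum.inr (k - m) ∈ (b.repr x).support
    · rw [if_pos h, mul_comm]
    · rw [if_neg h, Finsupp.notMem_support_iff.mp h, mul_zero]
  · intro i _
    rcases i with n | n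
    · rw [hLL n m, map_smul, Finsupp.smul_apply, b.repr_self, Finsupp.single_apply]
      simp
    · rw [← lie_skew, hLA m n, map_neg, map_smul, Finsupp.neg_apply, Finsupp.smul_apply,
        b.repr_self, Finsupp.single_apply]
      simp only [Sum.inr.injEq]
      by_cases h : n = k - m
      · subst h
        have e1 : m + (k - m) = k := by omega
        have e2 : (k - m = 0) ↔ (k = m) := by omega
        by_cases h2 : k = m
        · simp only [e1, if_pos rfl, if_pos h2, if_pos (e2.mpr h2)]
          push_cast [smul_eq_mul]; ring
        · simp only [e1, if_pos rfl, if_neg h2, if_neg (fun hh => h2 (e2.mp hh))]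
          push_cast [smul_eq_mul]; ring
      · simp [show ¬(m + n = k) by omega, h]

include hLA hAA in
lemma reprXA_L (x : L) (m k : ℤ) :
    b.repr ⁅x, b (Sum.inr m)⁆ (Sum.inl k) = 0 := by
  rw [repr_lie_apply]
  rw [Finsupp.sum_congr (g2 := fun _ _ => (0 : ℂ)), (show ((b.repr x).sum fun _ _ => (0:ℂ)) = 0 from Finset.sum_const_zero)]
  intro i _
  rcases i with n | n
  · rw [hLA n m, map_smul, Finsupp.smul_apply, b.repr_self, Finsupp.single_apply]
    simp
  · rw [hAA n m]
    simp

include hLA hAA in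
lemma reprXA_A (x : L) (m k : ℤ) :
    b.repr ⁅x, b (Sum.inr m)⁆ (Sum.inr k)
      = ((k : ℂ) + if m = 0 then lamTerm lam (k - m) else 0) * b.repr x (Sum.inl (k - m)) := by
  rw [repr_lie_apply]
  rw [Finsupp.sum_congr (g2 := fun i c => if i = Sum.inl (k - m) then
    c * ((k : ℂ) + if m = 0 then lamTerm lam (k - m) else 0) else 0)]
  · rw [Finsupp.sum_ite_eq']
    by_cases h : Sum.inl (k - m) ∈ (b.repr x).support
    · rw [if_pos h, mul_comm]
    · rw [if_neg h, Finsupp.notMem_support_iff.mp h, mul_zero]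
  · intro i _
    rcases i with n | n
    · rw [hLA n m, map_smul, Finsupp.smul_apply, b.repr_self, Finsupp.single_apply]
      simp only [Sum.inl.injEq]
      by_cases h : n = k - m
      · subst h
        have e1 : k - m + m = k := by omega
        by_cases h2 : m = 0
        · simp only [e1, if_pos rfl, if_pos h2]
          push_cast [smul_eq_mul]; ring
        · simp only [e1, if_pos rfl, if_neg h2]
          push_cast [smul_eq_mul]; ring
      · simp [show ¬(n + m = k) by omega, h]
    · rw [hAA n m]
      simp

variable (E : LieDerivation ℂ L L)

include hLL hLA in
lemma EqLL_L (n m k : ℤ) :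
    ((m : ℂ) - n) * b.repr (E (b (Sum.inl (n + m)))) (Sum.inl k)
      = (2 * (m : ℂ) - k) * b.repr (E (b (Sum.inl n))) (Sum.inl (k - m))
        - (2 * (n : ℂ) - k) * b.repr (E (b (Sum.inl m))) (Sum.inl (k - n)) := by
  have h := LieDerivation.apply_lie_eq_add E (b (Sum.inl n)) (b (Sum.inl m))
  rw [hLL, map_smul, ← lie_skew (b (Sum.inl n)) (E (b (Sum.inl m)))] at h
  have h2 := congrArg (fun z => b.repr z (Sum.inl k)) h
  simp only [map_smul, Finsupp.smul_apply, map_add, Finsupp.add_apply, map_neg,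
    Finsupp.neg_apply, smul_eq_mul] at h2
  rw [reprXL_L hLL hLA, reprXL_L hLL hLA] at h2
  linear_combination h2

include hLL hLA in
lemma EqLL_A (n m k : ℤ) :
    ((m : ℂ) - n) * b.repr (E (b (Sum.inl (n + m)))) (Sum.inr k)
      = ((k : ℂ) + if k = n then lamTerm lam n else 0)
          * b.repr (E (b (Sum.inl m))) (Sum.inr (k - n))
        - ((k : ℂ) + if k = m then lamTerm lam m else 0)
          * b.repr (E (b (Sum.inl n))) (Sum.inr (k - m)) := by
  have h := LieDerivation.apply_lie_eq_add E (b (Sum.inl n)) (b (Sum.inl m))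
  rw [hLL, map_smul, ← lie_skew (b (Sum.inl n)) (E (b (Sum.inl m)))] at h
  have h2 := congrArg (fun z => b.repr z (Sum.inr k)) h
  simp only [map_smul, Finsupp.smul_apply, map_add, Finsupp.add_apply, map_neg,
    Finsupp.neg_apply, smul_eq_mul] at h2
  rw [reprXL_A hLL hLA, reprXL_A hLL hLA] at h2
  linear_combination h2

include hLL hLA hAA in
lemma EqLA_L (n m k : ℤ) :
    ((n : ℂ) + m + (if m = 0 then lamTerm lam n else 0))
        * b.repr (E (b (Sum.inr (n + m)))) (Sum.inl k)
      = -((2 * (n : ℂ) - k) * b.repr (E (b (Sum.inr m))) (Sum.inl (k - n))) := by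
  have h := LieDerivation.apply_lie_eq_add E (b (Sum.inl n)) (b (Sum.inr m))
  rw [hLA, map_smul, ← lie_skew (b (Sum.inl n)) (E (b (Sum.inr m)))] at h
  have h2 := congrArg (fun z => b.repr z (Sum.inl k)) h
  simp only [map_smul, Finsupp.smul_apply, map_add, Finsupp.add_apply, map_neg,
    Finsupp.neg_apply, smul_eq_mul] at h2
  rw [reprXL_L hLL hLA, reprXA_L hLA hAA] at h2
  linear_combination h2

include hLL hLA hAA in
lemma EqLA_A (n m k : ℤ) :
    ((n : ℂ) + m + (if m = 0 then lamTerm lam n else 0))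
        * b.repr (E (b (Sum.inr (n + m)))) (Sum.inr k)
      = ((k : ℂ) + if m = 0 then lamTerm lam (k - m) else 0)
          * b.repr (E (b (Sum.inl n))) (Sum.inl (k - m))
        + ((k : ℂ) + if k = n then lamTerm lam n else 0)
          * b.repr (E (b (Sum.inr m))) (Sum.inr (k - n)) := by
  have h := LieDerivation.apply_lie_eq_add E (b (Sum.inl n)) (b (Sum.inr m))
  rw [hLA, map_smul, ← lie_skew (b (Sum.inl n)) (E (b (Sum.inr m)))] at h
  have h2 := congrArg (fun z => b.repr z (Sum.inr k)) h
  simp only [map_smul, Finsupp.smul_apply, map_add, Finsupp.add_apply, map_neg,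
    Finsupp.neg_apply, smul_eq_mul] at h2
  rw [reprXL_A hLL hLA, reprXA_A hLA hAA] at h2
  linear_combination h2

include hLL hLA hAA in
lemma EqAA_A (n m k : ℤ) :
    ((k : ℂ) + if m = 0 then lamTerm lam (k - m) else 0)
        * b.repr (E (b (Sum.inr n))) (Sum.inl (k - m))
      = ((k : ℂ) + if n = 0 then lamTerm lam (k - n) else 0)
          * b.repr (E (b (Sum.inr m))) (Sum.inl (k - n)) := by
  have h := LieDerivation.apply_lie_eq_add E (b (Sum.inr n)) (b (Sum.inr m))
  rw [hAA, ← lie_skew (b (Sum.inr n)) (E (b (Sum.inr m))), map_zero] at h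
  have h2 := congrArg (fun z => b.repr z (Sum.inr k)) h
  simp only [map_add, Finsupp.add_apply, map_neg, Finsupp.neg_apply, map_zero,
    Finsupp.zero_apply] at h2
  rw [reprXA_A hLA hAA, reprXA_A hLA hAA] at h2
  linear_combination -h2

end Repr

section Pure

lemma aux_additive (c : ℤ → ℂ) (h : ∀ n m : ℤ, n ≠ m → c (n + m) = c n + c m) :
    ∀ n : ℤ, c n = n * c 1 := by
  have h0 : c 0 = 0 := by
    have h01 := h 0 1 (by decide)
    norm_num at h01
    linear_combination h01
  have hm1 : c (-1) = -c 1 := by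
    have := h 1 (-1) (by decide)
    norm_num at this
    rw [h0] at this
    linear_combination -this
  have h2 : c 2 = 2 * c 1 := by
    have e3 := h 1 2 (by decide)
    have e4 := h 1 3 (by decide)
    have e5a := h 1 4 (by decide)
    have e5b := h 2 3 (by decide)
    norm_num at e3 e4 e5a e5b
    linear_combination e5a - e5b + e4
  intro n
  induction n using Int.induction_on with
  | zero => simpa using h0
  | succ i IH =>
    by_cases hi : (i : ℤ) = 1
    · rw [hi]; push_cast; linear_combination h2
    · have := h i 1 hi
      rw [this, IH]
      push_cast; ring
  | pred i IH =>
    by_cases hi : (i : ℤ) = 1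
    · rw [hi]
      have e3 := h 1 2 (by decide)
      have em2 := h (-2) 3 (by decide)
      norm_num at e3 em2
      push_cast
      linear_combination -em2 - e3 - h2
    · have := h (-(i : ℤ)) (-1) (by omega)
      rw [show -(i:ℤ) + -1 = -(i:ℤ) - 1 by ring] at this
      rw [this, IH, hm1]
      push_cast; ring

lemma aux_quadratic (e : ℤ → ℂ) (h0 : e 0 = 0)
    (hrec : ∀ n m : ℤ, ((m : ℂ) - n) * e (n + m) = ((n : ℂ) + m) * (e m - e n)) :
    ∀ n : ℤ, e n = (2 * e 1 - e 2 / 2) * n + (e 2 / 2 - e 1) * n ^ 2 := by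
  have hm1 : e (-1) = e 2 - 3 * e 1 := by
    have := hrec (-1) 2
    norm_num at this
    linear_combination this
  intro n
  induction n using Int.induction_on with
  | zero => rw [h0]; push_cast; ring
  | succ i IH =>
    match i, IH with
    | 0, _ => norm_num; ring_nf
    | 1, _ => push_cast; ring
    | (k + 2), IH =>
      set i : ℕ := k + 2 with hi
      have hne : ((i : ℂ) - 1) ≠ 0 := by
        refine sub_ne_zero.mpr ?_
        exact_mod_cast (show (i : ℕ) ≠ 1 by omega)
      have key : ((i : ℂ) - 1) * e ((i : ℤ) + 1)
          = ((i : ℂ) - 1) * ((2 * e 1 - e 2 / 2) * ((i : ℂ) + 1)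
            + (e 2 / 2 - e 1) * ((i : ℂ) + 1) ^ 2) := by
        have k0 := hrec 1 (i : ℤ)
        rw [show (1 : ℤ) + (i : ℤ) = (i : ℤ) + 1 by ring, IH] at k0
        push_cast at k0 ⊢
        linear_combination k0
      have := mul_left_cancel₀ hne key
      rw [this]
      push_cast; ring
  | pred i IH =>
    match i, IH with
    | 0, _ =>
      simp only [Nat.cast_zero, neg_zero, zero_sub]
      rw [hm1]; push_cast; ring
    | (k + 1), IH =>
      set i : ℕ := k + 1 with hi
      have hne : (-(i : ℂ)) ≠ 0 := by
        simp only [neg_ne_zero]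
        exact_mod_cast (show (i : ℕ) ≠ 0 by omega)
      have key : (-(i : ℂ)) * e (-(i : ℤ) - 1)
          = (-(i : ℂ)) * ((2 * e 1 - e 2 / 2) * (-(i : ℂ) - 1)
            + (e 2 / 2 - e 1) * (-(i : ℂ) - 1) ^ 2) := by
        have k0 := hrec (-(i : ℤ) - 1) 1
        rw [show -(i:ℤ) - 1 + 1 = -(i:ℤ) by ring, IH] at k0
        push_cast at k0 ⊢
        linear_combination k0
      have := mul_left_cancel₀ hne key
      rw [this]
      push_cast; ring

end Pure

section Main

set_option linter.unusedSectionVars false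
set_option maxHeartbeats 1000000

variable {lam : Option ℂ} {L : Type} [LieRing L] [LieAlgebra ℂ L] {b : Module.Basis (ℤ ⊕ ℤ) ℂ L}
variable (hLL : ∀ n m : ℤ,
      ⁅b (Sum.inl n), b (Sum.inl m)⁆ = ((m : ℂ) - (n : ℂ)) • b (Sum.inl (n + m)))
variable (hLA : ∀ n m : ℤ,
      ⁅b (Sum.inl n), b (Sum.inr m)⁆ =
        ((n : ℂ) + (m : ℂ) + (if m = 0 then lamTerm lam n else 0)) • b (Sum.inr (n + m)))
variable (hAA : ∀ n m : ℤ, ⁅b (Sum.inr n), b (Sum.inr m)⁆ = 0)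

lemma lam_ex (lam : Option ℂ) :
    ((1 : ℂ) + lamTerm lam 1 ≠ 0) ∨ ((2 : ℂ) + lamTerm lam 2 ≠ 0) := by
  cases lam with
  | none => left; norm_num [lamTerm]
  | some l =>
    by_contra hc
    push_neg at hc
    obtain ⟨h1, h2⟩ := hc
    simp only [lamTerm] at h1 h2
    norm_num at h1 h2
    have : (1 : ℂ) = 0 := by linear_combination 3 * h1 - h2
    norm_num at this

/-- correction element: divide each coefficient by minus its degree -/
noncomputable def corr (b : Module.Basis (ℤ ⊕ ℤ) ℂ L) (u : L) : L :=
  b.repr.symm ((b.repr u).sum fun j c =>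
    Finsupp.single j ((-((Sum.elim id id j : ℤ) : ℂ))⁻¹ * c))

lemma corr_repr (u : L) (j : ℤ ⊕ ℤ) :
    b.repr (corr b u) j = (-((Sum.elim id id j : ℤ) : ℂ))⁻¹ * b.repr u j := by
  rw [corr, LinearEquiv.apply_symm_apply, Finsupp.sum_apply]
  rw [Finsupp.sum_congr (g2 := fun i c =>
    if i = j then (-((Sum.elim id id j : ℤ) : ℂ))⁻¹ * c else 0)]
  · rw [Finsupp.sum_ite_eq']
    by_cases h : j ∈ (b.repr u).support
    · rw [if_pos h]
    · rw [if_neg h, Finsupp.notMem_support_iff.mp h, mul_zero]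
  · intro i _
    rw [Finsupp.single_apply]
    by_cases h : i = j
    · subst h; simp
    · simp [h]

lemma adApp (x y : L) : (LieDerivation.ad ℂ L x) y = ⁅x, y⁆ := by
  have h := LieDerivation.coe_ad_apply_eq_ad_apply (R := ℂ) (L := L) x
  calc (LieDerivation.ad ℂ L x) y = ((LieDerivation.ad ℂ L x : L →ₗ[ℂ] L)) y := rfl
    _ = ⁅x, y⁆ := by rw [h]; simp

include hLL hLA hAA in
lemma inner_comb (dAb dlam : LieDerivation ℂ L L)
    (hAb1 : ∀ n : ℤ, dAb (b (Sum.inl n)) = 0)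
    (hAb2 : ∀ n : ℤ, dAb (b (Sum.inr n)) = b (Sum.inr n))
    (hdlam1 : ∀ n : ℤ, dlam (b (Sum.inl n)) =
      (if lam = some 0 then ((n : ℂ)) ^ 2 else (n : ℂ)) • b (Sum.inr n))
    (hdlam2 : ∀ n : ℤ, dlam (b (Sum.inr n)) = 0)
    (x : L) (a c : ℂ)
    (h : ∀ j : ℤ ⊕ ℤ, ⁅x, b j⁆ = a • dAb (b j) + c • dlam (b j)) :
    a = 0 ∧ c = 0 := by
  classical
  have hXL : ∀ i : ℤ, b.repr x (Sum.inl i) = 0 := by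
    intro i
    have h1 := congrArg (fun z => b.repr z (Sum.inl (2*i + 1))) (h (Sum.inl (i + 1)))
    rw [reprXL_L hLL hLA, show 2*i + 1 - (i + 1) = i by ring] at h1
    have hz : b.repr (a • dAb (b (Sum.inl (i+1))) + c • dlam (b (Sum.inl (i+1))))
        (Sum.inl (2*i + 1)) = 0 := by
      rw [hAb1, hdlam1]
      split_ifs <;> simp [Finsupp.single_apply]
    rw [hz] at h1
    push_cast at h1
    linear_combination h1
  have hXA : ∀ i : ℤ, i ≠ 0 → b.repr x (Sum.inr i) = 0 := by
    intro i hi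
    have h1 := congrArg (fun z => b.repr z (Sum.inr (2*i))) (h (Sum.inl i))
    rw [reprXL_A hLL hLA, show 2*i - i = i by ring, if_neg (by omega : ¬ (2*i = i))] at h1
    have hz : b.repr (a • dAb (b (Sum.inl i)) + c • dlam (b (Sum.inl i)))
        (Sum.inr (2*i)) = 0 := by
      rw [hAb1, hdlam1]
      split_ifs <;>
      · simp only [smul_zero, zero_add, map_smul, b.repr_self, Finsupp.smul_apply,
          Finsupp.single_apply]
        rw [if_neg (by simp only [Sum.inr.injEq]; omega)]
        simp
    rw [hz] at h1
    have h2 : -(((2*i : ℤ) : ℂ) + 0) ≠ 0 := by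
      simp only [add_zero, neg_ne_zero]
      exact_mod_cast (by omega : (2*i : ℤ) ≠ 0)
    exact (mul_eq_zero.mp h1).resolve_left h2
  have ha : a = 0 := by
    have h1 := congrArg (fun z => b.repr z (Sum.inr 0)) (h (Sum.inr 0))
    rw [reprXA_A hLA hAA, show (0:ℤ) - 0 = 0 by ring, hXL 0, mul_zero] at h1
    rw [hAb2, hdlam2, smul_zero, add_zero, map_smul, b.repr_self] at h1
    simp only [Finsupp.smul_apply, Finsupp.single_apply, if_pos rfl, smul_eq_mul,
      mul_one] at h1
    simpa using h1.symm
  have hstar : ∀ m : ℤ, -((m:ℂ) + lamTerm lam m) * b.repr x (Sum.inr 0)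
      = c * (if lam = some 0 then (m:ℂ)^2 else (m:ℂ)) := by
    intro m
    have h1 := congrArg (fun z => b.repr z (Sum.inr m)) (h (Sum.inl m))
    rw [reprXL_A hLL hLA, if_pos rfl, show m - m = 0 by ring] at h1
    rw [hAb1, hdlam1, smul_zero, zero_add, map_smul, map_smul, b.repr_self] at h1
    rw [Finsupp.smul_apply, Finsupp.smul_apply, Finsupp.single_apply, if_pos rfl] at h1
    simpa [smul_eq_mul] using h1
  refine ⟨ha, ?_⟩
  cases lam with
  | none =>
    have h1 := hstar (-1)
    rw [if_neg (by simp : ¬ ((none : Option ℂ) = some (0:ℂ)))] at h1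
    have hl : lamTerm none (-1) = ((-1 : ℤ):ℂ)^2 := rfl
    rw [hl] at h1
    push_cast at h1
    linear_combination h1
  | some l =>
    by_cases hl0 : l = 0
    · subst hl0
      have h1 := hstar 1
      have h2 := hstar (-1)
      rw [if_pos rfl] at h1 h2
      have hl1 : lamTerm (some (0:ℂ)) 1 = 0 := by simp [lamTerm]
      have hl2 : lamTerm (some (0:ℂ)) (-1) = 0 := by simp [lamTerm]
      rw [hl1] at h1
      rw [hl2] at h2
      push_cast at h1 h2
      linear_combination -(h1 + h2) / 2
    · have h1 := hstar 1
      have h2 := hstar 2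
      rw [if_neg (by simpa using hl0)] at h1 h2
      have hl1 : lamTerm (some l) 1 = 2*l := by norm_num [lamTerm]
      have hl2 : lamTerm (some l) 2 = 6*l := by norm_num [lamTerm]
      rw [hl1] at h1
      rw [hl2] at h2
      push_cast at h1 h2
      have h3 : (2*l) * b.repr x (Sum.inr 0) = 0 := by linear_combination 2*h1 - h2
      have hx0 : b.repr x (Sum.inr 0) = 0 :=
        (mul_eq_zero.mp h3).resolve_left (mul_ne_zero two_ne_zero hl0)
      rw [hx0, mul_zero] at h1
      linear_combination -h1

include hLL hLA hAA in
lemma main_decomp (dAb dlam : LieDerivation ℂ L L)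
    (hAb1 : ∀ n : ℤ, dAb (b (Sum.inl n)) = 0)
    (hAb2 : ∀ n : ℤ, dAb (b (Sum.inr n)) = b (Sum.inr n))
    (hdlam1 : ∀ n : ℤ, dlam (b (Sum.inl n)) =
      (if lam = some 0 then ((n : ℂ)) ^ 2 else (n : ℂ)) • b (Sum.inr n))
    (hdlam2 : ∀ n : ℤ, dlam (b (Sum.inr n)) = 0)
    (D : LieDerivation ℂ L L) :
    ∃ (x : L) (a s : ℂ), ∀ j : ℤ ⊕ ℤ,
      D (b j) = ⁅x, b j⁆ + a • dAb (b j) + s • dlam (b j) := by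
  classical
  set xc : L := corr b (D (b (Sum.inl 0))) with hxc
  set E : LieDerivation ℂ L L := D - LieDerivation.ad ℂ L xc with hEdef
  have hE : ∀ y : L, E y = D y - ⁅xc, y⁆ := by
    intro y
    rw [hEdef, LieDerivation.sub_apply]
    congr 1
    have := LieDerivation.coe_ad_apply_eq_ad_apply (R := ℂ) (L := L) xc
    calc (LieDerivation.ad ℂ L xc) y = ((LieDerivation.ad ℂ L xc : L →ₗ[ℂ] L)) y := rfl
      _ = ⁅xc, y⁆ := by rw [this]; simp
  have hD : ∀ y : L, D y = E y + ⁅xc, y⁆ := fun y => by rw [hE]; exact (sub_add_cancel _ _).symm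
  -- Step 0 : off-degree coefficients of E L₀ vanish
  have key0 : ∀ j : ℤ ⊕ ℤ, (Sum.elim id id j : ℤ) ≠ 0 →
      b.repr (E (b (Sum.inl 0))) j = 0 := by
    intro j hj
    rw [hE, map_sub, Finsupp.sub_apply]
    rcases j with k | k
    · simp only [Sum.elim_inl, id] at hj
      rw [reprXL_L hLL hLA, corr_repr, show ((k : ℤ) - 0) = k by ring]
      simp only [Sum.elim_inl, id]
      have hk : (k : ℂ) ≠ 0 := by exact_mod_cast hj
      push_cast
      field_simp
      ring
    · simp only [Sum.elim_inr, id] at hj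
      rw [reprXL_A hLL hLA, corr_repr, show ((k : ℤ) - 0) = k by ring, if_neg hj]
      simp only [Sum.elim_inr, id]
      have hk : (k : ℂ) ≠ 0 := by exact_mod_cast hj
      push_cast
      field_simp
      ring
  -- Step 1 : E L₀ = 0
  have halpha : b.repr (E (b (Sum.inl 0))) (Sum.inl 0) = 0 := by
    have h := EqLL_L hLL hLA E 0 1 1
    norm_num at h
    linear_combination h
  have hbeta : b.repr (E (b (Sum.inl 0))) (Sum.inr 0) = 0 := by
    rcases lam_ex lam with h1 | h2
    · have h := EqLL_A hLL hLA E 0 1 1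
      norm_num at h
      have hb : ((1 : ℂ) + lamTerm lam 1) * b.repr (E (b (Sum.inl 0))) (Sum.inr 0) = 0 := by
        linear_combination h
      exact (mul_eq_zero.mp hb).resolve_left h1
    · have h := EqLL_A hLL hLA E 0 2 2
      norm_num at h
      have hb : ((2 : ℂ) + lamTerm lam 2) * b.repr (E (b (Sum.inl 0))) (Sum.inr 0) = 0 := by
        linear_combination h
      exact (mul_eq_zero.mp hb).resolve_left h2
  have h0all : ∀ j : ℤ ⊕ ℤ, b.repr (E (b (Sum.inl 0))) j = 0 := by
    intro j
    by_cases hj : (Sum.elim id id j : ℤ) = 0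
    · rcases j with k | k
      · simp only [Sum.elim_inl, id] at hj; subst hj; exact halpha
      · simp only [Sum.elim_inr, id] at hj; subst hj; exact hbeta
    · exact key0 j hj
  -- Step 2 : degree concentration
  have hconcL : ∀ (m : ℤ) (j : ℤ ⊕ ℤ), (Sum.elim id id j : ℤ) ≠ m →
      b.repr (E (b (Sum.inl m))) j = 0 := by
    intro m j hj
    rcases j with k | k
    · simp only [Sum.elim_inl, id] at hj
      have h := EqLL_L hLL hLA E 0 m k
      rw [show (0 : ℤ) + m = m by ring, show k - (0:ℤ) = k by ring] at h
      have hz := h0all (Sum.inl (k - m))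
      rw [hz] at h
      have hmk : ((m : ℂ) - k) * (b.repr (E (b (Sum.inl m))) (Sum.inl k)) = 0 := by
        push_cast at h ⊢
        linear_combination h
      refine (mul_eq_zero.mp hmk).elim (fun hc => absurd ?_ hj) id
      have : (m : ℂ) = k := by linear_combination hc
      exact_mod_cast this.symm
    · simp only [Sum.elim_inr, id] at hj
      have h := EqLL_A hLL hLA E 0 m k
      rw [show (0 : ℤ) + m = m by ring, show k - (0:ℤ) = k by ring] at h
      have hz := h0all (Sum.inr (k - m))
      rw [hz, lamTerm_zero] at h
      simp only [ite_self, add_zero, mul_zero, sub_zero] at h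
      have hmk : ((m : ℂ) - k) * (b.repr (E (b (Sum.inl m))) (Sum.inr k)) = 0 := by
        push_cast at h ⊢
        linear_combination h
      refine (mul_eq_zero.mp hmk).elim (fun hc => absurd ?_ hj) id
      have : (m : ℂ) = k := by linear_combination hc
      exact_mod_cast this.symm
  have hconcA : ∀ (m : ℤ) (j : ℤ ⊕ ℤ), (Sum.elim id id j : ℤ) ≠ m →
      b.repr (E (b (Sum.inr m))) j = 0 := by
    intro m j hj
    rcases j with k | k
    · simp only [Sum.elim_inl, id] at hj
      have h := EqLA_L hLL hLA hAA E 0 m k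
      rw [show (0 : ℤ) + m = m by ring, show k - (0:ℤ) = k by ring, lamTerm_zero] at h
      simp only [ite_self, add_zero] at h
      have hmk : ((m : ℂ) - k) * (b.repr (E (b (Sum.inr m))) (Sum.inl k)) = 0 := by
        push_cast at h ⊢
        linear_combination h
      refine (mul_eq_zero.mp hmk).elim (fun hc => absurd ?_ hj) id
      have : (m : ℂ) = k := by linear_combination hc
      exact_mod_cast this.symm
    · simp only [Sum.elim_inr, id] at hj
      have h := EqLA_A hLL hLA hAA E 0 m k
      rw [show (0 : ℤ) + m = m by ring, show k - (0:ℤ) = k by ring] at h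
      rw [h0all (Sum.inl (k - m)), lamTerm_zero] at h
      simp only [ite_self, add_zero, mul_zero, zero_add] at h
      have hmk : ((m : ℂ) - k) * (b.repr (E (b (Sum.inr m))) (Sum.inr k)) = 0 := by
        push_cast at h ⊢
        linear_combination h
      refine (mul_eq_zero.mp hmk).elim (fun hc => absurd ?_ hj) id
      have : (m : ℂ) = k := by linear_combination hc
      exact_mod_cast this.symm
  -- Step 3 : the `A → L` coefficients vanish
  have FF : ∀ n m : ℤ, ((n : ℂ) + m + if m = 0 then lamTerm lam n else 0)
      * b.repr (E (b (Sum.inr (n + m)))) (Sum.inl (n + m))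
      = ((m : ℂ) - n) * b.repr (E (b (Sum.inr m))) (Sum.inl m) := by
    intro n m
    have h := EqLA_L hLL hLA hAA E n m (n + m)
    rw [show n + m - n = m by ring] at h
    rw [h]
    push_cast
    ring
  have hf : ∀ n : ℤ, b.repr (E (b (Sum.inr n))) (Sum.inl n) = 0 := by
    have feven : ∀ m : ℤ, m ≠ 0 → b.repr (E (b (Sum.inr (m + m)))) (Sum.inl (m + m)) = 0 := by
      intro m hm
      have h := FF m m
      rw [if_neg hm] at h
      have h2 : ((m : ℂ) + m) * b.repr (E (b (Sum.inr (m + m)))) (Sum.inl (m + m)) = 0 := by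
        linear_combination h
      refine (mul_eq_zero.mp h2).resolve_left ?_
      have : ((m : ℂ) + m) = ((m + m : ℤ) : ℂ) := by push_cast; ring
      rw [this]
      exact_mod_cast (by omega : (m + m : ℤ) ≠ 0)
    have fne : ∀ k : ℤ, k ≠ 0 → b.repr (E (b (Sum.inr k))) (Sum.inl k) = 0 := by
      intro k hk
      by_cases hk1 : k = 1
      · subst hk1
        have h := FF (-1) 2
        norm_num at h
        rw [show (2 : ℤ) = 1 + 1 by norm_num, feven 1 one_ne_zero] at h
        linear_combination h
      · rcases Int.even_or_odd k with ⟨m, hm⟩ | ⟨m, hm⟩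
        · subst hm
          exact feven m (by omega)
        · have h := FF 1 (k - 1)
          rw [if_neg (by omega : ¬ (k - 1 = 0)), show (1 : ℤ) + (k - 1) = k by ring] at h
          have hz : b.repr (E (b (Sum.inr (k - 1)))) (Sum.inl (k - 1)) = 0 := by
            rw [show k - 1 = m + m by omega]
            exact feven m (by omega)
          rw [hz] at h
          have h2 : ((1 : ℂ) + ((k : ℂ) - 1)) * b.repr (E (b (Sum.inr k))) (Sum.inl k) = 0 := by
            push_cast at h ⊢
            linear_combination h
          refine (mul_eq_zero.mp h2).resolve_left ?_
          have : ((1 : ℂ) + ((k : ℂ) - 1)) = ((k : ℤ) : ℂ) := by push_cast; ring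
          rw [this]
          exact_mod_cast hk
    intro n
    by_cases hn : n = 0
    · subst hn
      have h := FF 1 0
      rw [if_pos rfl, show (1 : ℤ) + 0 = 1 by ring, fne 1 one_ne_zero] at h
      push_cast at h
      linear_combination h
    · exact fne n hn
  -- Step 4 : diagonal L-coefficients are linear
  have hcadd : ∀ n m : ℤ, n ≠ m →
      b.repr (E (b (Sum.inl (n + m)))) (Sum.inl (n + m))
        = b.repr (E (b (Sum.inl n))) (Sum.inl n)
          + b.repr (E (b (Sum.inl m))) (Sum.inl m) := by
    intro n m hnm
    have h := EqLL_L hLL hLA E n m (n + m)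
    rw [show n + m - m = n by ring, show n + m - n = m by ring] at h
    have hne : ((m : ℂ) - n) ≠ 0 := by
      refine sub_ne_zero.mpr ?_
      exact_mod_cast (Ne.symm hnm)
    apply mul_left_cancel₀ hne
    rw [h]
    push_cast
    ring
  have hc : ∀ n : ℤ, b.repr (E (b (Sum.inl n))) (Sum.inl n)
      = (n : ℂ) * b.repr (E (b (Sum.inl 1))) (Sum.inl 1) :=
    aux_additive _ hcadd
  -- Step 5 : diagonal A-coefficients
  have GG : ∀ n m : ℤ, ((n : ℂ) + m + if m = 0 then lamTerm lam n else 0)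
      * b.repr (E (b (Sum.inr (n + m)))) (Sum.inr (n + m))
      = ((n : ℂ) + m + if m = 0 then lamTerm lam n else 0)
        * (b.repr (E (b (Sum.inl n))) (Sum.inl n)
            + b.repr (E (b (Sum.inr m))) (Sum.inr m)) := by
    intro n m
    have h := EqLA_A hLL hLA hAA E n m (n + m)
    rw [show n + m - m = n by ring, show n + m - n = m by ring] at h
    simp only [show (n + m = n) ↔ (m = 0) from by omega] at h
    rw [h]
    push_cast
    ring
  have hg : ∀ k : ℤ, b.repr (E (b (Sum.inr k))) (Sum.inr k)
      = b.repr (E (b (Sum.inr 0))) (Sum.inr 0)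
        + (k : ℂ) * b.repr (E (b (Sum.inl 1))) (Sum.inl 1) := by
    have base : ∀ m : ℤ, ((m : ℂ) + lamTerm lam m) ≠ 0 →
        b.repr (E (b (Sum.inr m))) (Sum.inr m)
          = b.repr (E (b (Sum.inr 0))) (Sum.inr 0)
            + (m : ℂ) * b.repr (E (b (Sum.inl 1))) (Sum.inl 1) := by
      intro m hm
      have h := GG m 0
      rw [if_pos rfl, show m + (0:ℤ) = m by ring] at h
      have hne : ((m : ℂ) + ((0 : ℤ) : ℂ) + lamTerm lam m) ≠ 0 := by
        push_cast; rw [add_zero]; exact hm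
      have := mul_left_cancel₀ hne h
      rw [this, hc m]
      push_cast
      ring
    intro k
    by_cases hk0 : k = 0
    · subst hk0; push_cast; ring
    by_cases hkl : ((k : ℂ) + lamTerm lam k) ≠ 0
    · exact base k hkl
    push_neg at hkl
    have hstep : ∀ m : ℤ, m ≠ 0 →
        b.repr (E (b (Sum.inr m))) (Sum.inr m)
          = b.repr (E (b (Sum.inr 0))) (Sum.inr 0)
            + (m : ℂ) * b.repr (E (b (Sum.inl 1))) (Sum.inl 1) →
        b.repr (E (b (Sum.inr k))) (Sum.inr k)
          = b.repr (E (b (Sum.inr 0))) (Sum.inr 0)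
            + (k : ℂ) * b.repr (E (b (Sum.inl 1))) (Sum.inl 1) := by
      intro m hm hgm
      have h := GG (k - m) m
      rw [if_neg hm, show k - m + m = k by ring] at h
      have hne : ((k - m : ℤ) : ℂ) + m + 0 ≠ 0 := by
        push_cast
        rw [show ((k:ℂ) - m + m + 0) = (k : ℂ) by ring]
        exact_mod_cast hk0
      have := mul_left_cancel₀ hne h
      rw [this, hc (k - m), hgm]
      push_cast
      ring
    rcases lam_ex lam with h1 | h2
    · exact hstep 1 one_ne_zero (base 1 (by exact_mod_cast h1))
    · exact hstep 2 two_ne_zero (base 2 (by exact_mod_cast h2))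
  -- Step 6 : off-diagonal L→A coefficients are quadratic
  have he0 : b.repr (E (b (Sum.inl 0))) (Sum.inr 0) = 0 := hbeta
  have erec : ∀ n m : ℤ, ((m : ℂ) - n) * b.repr (E (b (Sum.inl (n + m)))) (Sum.inr (n + m))
      = ((n : ℂ) + m) * (b.repr (E (b (Sum.inl m))) (Sum.inr m)
          - b.repr (E (b (Sum.inl n))) (Sum.inr n)) := by
    intro n m
    have h := EqLL_A hLL hLA E n m (n + m)
    rw [show n + m - m = n by ring, show n + m - n = m by ring] at h
    simp only [show (n + m = n) ↔ (m = 0) from by omega,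
      show (n + m = m) ↔ (n = 0) from by omega] at h
    by_cases hn0 : n = 0
    · subst hn0
      rw [show (0:ℤ) + m = m by ring] at h ⊢
      simp only [lamTerm_zero, ite_self] at h
      norm_num at h
      push_cast at h ⊢
      linear_combination h - lamTerm lam m * he0
    · by_cases hm0 : m = 0
      · subst hm0
        rw [show n + (0:ℤ) = n by ring] at h ⊢
        simp only [lamTerm_zero, ite_self] at h
        norm_num at h
        push_cast at h ⊢
        linear_combination h + lamTerm lam n * he0
      · rw [if_neg hn0, if_neg hm0] at h
        push_cast at h ⊢
        linear_combination h
  have he : ∀ n : ℤ, b.repr (E (b (Sum.inl n))) (Sum.inr n)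
      = (2 * b.repr (E (b (Sum.inl 1))) (Sum.inr 1)
          - b.repr (E (b (Sum.inl 2))) (Sum.inr 2) / 2) * (n : ℂ)
        + (b.repr (E (b (Sum.inl 2))) (Sum.inr 2) / 2
          - b.repr (E (b (Sum.inl 1))) (Sum.inr 1)) * (n : ℂ) ^ 2 :=
    aux_quadratic _ he0 erec
  -- element forms
  have hEL : ∀ n : ℤ, E (b (Sum.inl n))
      = (b.repr (E (b (Sum.inl n))) (Sum.inl n)) • b (Sum.inl n)
        + (b.repr (E (b (Sum.inl n))) (Sum.inr n)) • b (Sum.inr n) := by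
    intro n
    apply b.repr.injective
    rw [map_add, map_smul, map_smul, b.repr_self, b.repr_self]
    ext j
    rw [Finsupp.add_apply, Finsupp.smul_apply, Finsupp.smul_apply, Finsupp.single_apply,
      Finsupp.single_apply, smul_eq_mul, smul_eq_mul]
    rcases j with k | k
    · by_cases hk : n = k
      · subst hk; simp
      · rw [if_neg (by simpa using hk), if_neg (by simp), hconcL n (Sum.inl k)
          (by simp only [Sum.elim_inl, id]; exact fun hh => hk hh.symm)]
        ring
    · by_cases hk : n = k
      · subst hk; simp
      · rw [if_neg (by simp), if_neg (by simpa using hk), hconcL n (Sum.inr k)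
          (by simp only [Sum.elim_inr, id]; exact fun hh => hk hh.symm)]
        ring
  have hEA : ∀ n : ℤ, E (b (Sum.inr n))
      = (b.repr (E (b (Sum.inr n))) (Sum.inr n)) • b (Sum.inr n) := by
    intro n
    apply b.repr.injective
    rw [map_smul, b.repr_self]
    ext j
    rw [Finsupp.smul_apply, Finsupp.single_apply, smul_eq_mul]
    rcases j with k | k
    · rw [if_neg (by simp), mul_zero]
      by_cases hk : n = k
      · subst hk; exact hf n
      · exact hconcA n (Sum.inl k) (by simp only [Sum.elim_inl, id]; exact fun hh => hk hh.symm)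
    · by_cases hk : n = k
      · subst hk; simp
      · rw [if_neg (by simpa using hk), hconcA n (Sum.inr k)
          (by simp only [Sum.elim_inr, id]; exact fun hh => hk hh.symm)]
        ring
  -- bracket values
  have adL0L : ∀ n : ℤ, ⁅b (Sum.inl 0), b (Sum.inl n)⁆ = (n : ℂ) • b (Sum.inl n) := by
    intro n
    rw [hLL 0 n, show (0:ℤ) + n = n by ring]
    norm_num
  have adL0A : ∀ n : ℤ, ⁅b (Sum.inl 0), b (Sum.inr n)⁆ = (n : ℂ) • b (Sum.inr n) := by
    intro n
    rw [hLA 0 n, show (0:ℤ) + n = n by ring, lamTerm_zero]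
    simp only [ite_self]
    norm_num
  have adA0L : ∀ n : ℤ,
      ⁅b (Sum.inr 0), b (Sum.inl n)⁆ = -((((n : ℂ)) + lamTerm lam n) • b (Sum.inr n)) := by
    intro n
    rw [← lie_skew, hLA n 0, if_pos rfl, show n + (0:ℤ) = n by ring]
    norm_num
  -- Step 7 : choose the constants
  obtain ⟨t, s, hts⟩ : ∃ t s : ℂ, ∀ n : ℤ,
      b.repr (E (b (Sum.inl n))) (Sum.inr n)
        = -t * ((n : ℂ) + lamTerm lam n)
          + s * (if lam = some 0 then ((n : ℂ)) ^ 2 else (n : ℂ)) := by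
    set e1 := b.repr (E (b (Sum.inl 1))) (Sum.inr 1) with he1
    set e2 := b.repr (E (b (Sum.inl 2))) (Sum.inr 2) with he2
    cases lam with
    | none =>
      refine ⟨-(e2/2 - e1), (2*e1 - e2/2) - (e2/2 - e1), fun n => ?_⟩
      rw [he n, if_neg (by simp : ¬ ((none : Option ℂ) = some (0:ℂ)))]
      have hl : lamTerm none n = (n:ℂ)^2 := rfl
      rw [hl]
      ring
    | some l =>
      by_cases hl0 : l = 0
      · subst hl0
        refine ⟨-(2*e1 - e2/2), e2/2 - e1, fun n => ?_⟩
        rw [he n, if_pos rfl]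
        have hl : lamTerm (some 0) n = 0 := by simp [lamTerm]
        rw [hl]
        ring
      · refine ⟨-((e2/2 - e1)/l), (2*e1 - e2/2) - ((e2/2 - e1)/l)*(1+l), fun n => ?_⟩
        rw [he n, if_neg (by simpa using hl0)]
        have hl : lamTerm (some l) n = (n:ℂ)*((n:ℂ)+1)*l := rfl
        rw [hl]
        field_simp
        ring
  -- final assembly
  refine ⟨xc + (b.repr (E (b (Sum.inl 1))) (Sum.inl 1)) • b (Sum.inl 0) + t • b (Sum.inr 0),
    b.repr (E (b (Sum.inr 0))) (Sum.inr 0), s, ?_⟩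
  have hbr : ∀ y : L,
      ⁅xc + (b.repr (E (b (Sum.inl 1))) (Sum.inl 1)) • b (Sum.inl 0) + t • b (Sum.inr 0), y⁆
      = ⁅xc, y⁆ + (b.repr (E (b (Sum.inl 1))) (Sum.inl 1)) • ⁅b (Sum.inl 0), y⁆
        + t • ⁅b (Sum.inr 0), y⁆ := by
    intro y
    rw [add_lie, add_lie, smul_lie, smul_lie]
  intro j
  rcases j with n | n
  · rw [hD (b (Sum.inl n)), hEL n, hbr, hAb1 n, hdlam1 n, adL0L n, adA0L n, hc n, hts n]
    simp only [smul_zero]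
    module
  · rw [hD (b (Sum.inr n)), hEA n, hbr, hAb2 n, hdlam2 n, adL0A n, hAA 0 n, hg n]
    simp only [smul_zero]
    module

end Main

set_option maxHeartbeats 1000000 in
/-- `Der(W_A(λ)) = Inn(W_A(λ)) ⊕ ℂ·d_Ab ⊕ ℂ·d_λ^A`, an internal direct sum;
consequently the space of outer derivations is two-dimensional. -/
theorem stmt_18 (lam : Option ℂ) (L : Type) [LieRing L] [LieAlgebra ℂ L]
    (b : Module.Basis (ℤ ⊕ ℤ) ℂ L)
    (hLL : ∀ n m : ℤ,
      ⁅b (Sum.inl n), b (Sum.inl m)⁆ = ((m : ℂ) - (n : ℂ)) • b (Sum.inl (n + m)))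
    (hLA : ∀ n m : ℤ,
      ⁅b (Sum.inl n), b (Sum.inr m)⁆ =
        ((n : ℂ) + (m : ℂ) + (if m = 0 then lamTerm lam n else 0)) • b (Sum.inr (n + m)))
    (hAA : ∀ n m : ℤ, ⁅b (Sum.inr n), b (Sum.inr m)⁆ = 0)
    (dAb dlam : LieDerivation ℂ L L)
    (hAb1 : ∀ n : ℤ, dAb (b (Sum.inl n)) = 0)
    (hAb2 : ∀ n : ℤ, dAb (b (Sum.inr n)) = b (Sum.inr n))
    (hdlam1 : ∀ n : ℤ, dlam (b (Sum.inl n)) =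
      (if lam = some 0 then ((n : ℂ)) ^ 2 else (n : ℂ)) • b (Sum.inr n))
    (hdlam2 : ∀ n : ℤ, dlam (b (Sum.inr n)) = 0) :
    DirectSum.IsInternal
      ![innerDerivations L, Submodule.span ℂ {dAb}, Submodule.span ℂ {dlam}] ∧
    Module.finrank ℂ (LieDerivation ℂ L L ⧸ innerDerivations L) = 2 := by
  classical
  have hmem : ∀ D : LieDerivation ℂ L L, ∃ (D₀ : LieDerivation ℂ L L) (a s : ℂ),
      D₀ ∈ innerDerivations L ∧ D = D₀ + a • dAb + s • dlam := by
    intro D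
    obtain ⟨x, a, s, hxs⟩ := main_decomp hLL hLA hAA dAb dlam hAb1 hAb2 hdlam1 hdlam2 D
    refine ⟨D - a • dAb - s • dlam, a, s, ⟨x, ?_⟩, by abel⟩
    have hlin : ((D - a • dAb - s • dlam : LieDerivation ℂ L L) : L →ₗ[ℂ] L)
        = ((LieDerivation.ad ℂ L x : LieDerivation ℂ L L) : L →ₗ[ℂ] L) := by
      apply b.ext
      intro j
      show (D - a • dAb - s • dlam) (b j) = (LieDerivation.ad ℂ L x) (b j)
      rw [LieDerivation.sub_apply, LieDerivation.sub_apply, LieDerivation.smul_apply,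
        LieDerivation.smul_apply, adApp, hxs j]
      abel
    intro y
    have hy := LinearMap.congr_fun hlin y
    calc (D - a • dAb - s • dlam) y = (LieDerivation.ad ℂ L x) y := hy
      _ = ⁅x, y⁆ := adApp _ _
  have hdis : ∀ (x : L) (a c : ℂ), (∀ y : L, a • dAb y + c • dlam y = ⁅x, y⁆) →
      a = 0 ∧ c = 0 := by
    intro x a c hy
    exact inner_comb hLL hLA hAA dAb dlam hAb1 hAb2 hdlam1 hdlam2 x a c
      (fun j => (hy (b j)).symm)
  -- disjointness of inner derivations with the span of dAb and dlam
  have hdisj : Disjoint (innerDerivations L)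
      (Submodule.span ℂ {dAb} ⊔ Submodule.span ℂ {dlam}) := by
    rw [Submodule.disjoint_def]
    intro D hD hD'
    obtain ⟨x, hx⟩ := hD
    rw [Submodule.mem_sup] at hD'
    obtain ⟨D1, hD1, D2, hD2, hDsum⟩ := hD'
    obtain ⟨a, rfl⟩ := Submodule.mem_span_singleton.mp hD1
    obtain ⟨c, rfl⟩ := Submodule.mem_span_singleton.mp hD2
    obtain ⟨ha, hc⟩ := hdis x a c (fun y => by
      have := congrArg (fun (Z : LieDerivation ℂ L L) => Z y) hDsum
      simp only [LieDerivation.add_apply, LieDerivation.smul_apply] at this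
      rw [this, hx y])
    rw [← hDsum, ha, hc, zero_smul, zero_smul, add_zero]
  have hsup : (innerDerivations L) ⊔ (Submodule.span ℂ {dAb} ⊔ Submodule.span ℂ {dlam})
      = ⊤ := by
    rw [eq_top_iff]
    intro D _
    obtain ⟨D₀, a, s, hD₀, hDeq⟩ := hmem D
    rw [hDeq]
    refine add_mem (add_mem ?_ ?_) ?_
    · exact Submodule.mem_sup_left hD₀
    · exact Submodule.mem_sup_right (Submodule.mem_sup_left
        (Submodule.smul_mem _ a (Submodule.mem_span_singleton_self dAb)))
    · exact Submodule.mem_sup_right (Submodule.mem_sup_right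
        (Submodule.smul_mem _ s (Submodule.mem_span_singleton_self dlam)))
  constructor
  · -- internal direct sum
    rw [DirectSum.isInternal_submodule_iff_iSupIndep_and_iSup_eq_top]
    constructor
    · intro i
      fin_cases i
      · -- i = 0
        refine Disjoint.mono_right ?_ hdisj
        apply iSup_le
        intro j
        apply iSup_le
        intro hj
        fin_cases j
        · exact absurd rfl hj
        · exact le_sup_left
        · exact le_sup_right
      · -- i = 1
        rw [Submodule.disjoint_def]
        intro D hD hD'
        have hle : (⨆ j, ⨆ (_ : j ≠ (1 : Fin 3)),
            ![innerDerivations L, Submodule.span ℂ {dAb}, Submodule.span ℂ {dlam}] j)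
            ≤ innerDerivations L ⊔ Submodule.span ℂ {dlam} := by
          apply iSup_le
          intro j
          apply iSup_le
          intro hj
          fin_cases j
          · exact le_sup_left
          · exact absurd rfl hj
          · exact le_sup_right
        have hD'' := hle hD'
        rw [Submodule.mem_sup] at hD''
        obtain ⟨D1, ⟨x, hx⟩, D2, hD2, hDsum⟩ := hD''
        obtain ⟨c, rfl⟩ := Submodule.mem_span_singleton.mp hD2
        obtain ⟨a, rfl⟩ := Submodule.mem_span_singleton.mp hD
        obtain ⟨ha, _⟩ := hdis x a (-c) (fun y => by
          have := congrArg (fun (Z : LieDerivation ℂ L L) => Z y) hDsum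
          simp only [LieDerivation.add_apply, LieDerivation.smul_apply] at this
          rw [neg_smul, ← hx y]
          linear_combination (norm := module) -this)
        rw [ha, zero_smul]
      · -- i = 2
        rw [Submodule.disjoint_def]
        intro D hD hD'
        have hle : (⨆ j, ⨆ (_ : j ≠ (2 : Fin 3)),
            ![innerDerivations L, Submodule.span ℂ {dAb}, Submodule.span ℂ {dlam}] j)
            ≤ innerDerivations L ⊔ Submodule.span ℂ {dAb} := by
          apply iSup_le
          intro j
          apply iSup_le
          intro hj
          fin_cases j
          · exact le_sup_left
          · exact le_sup_right
          · exact absurd rfl hj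
        have hD'' := hle hD'
        rw [Submodule.mem_sup] at hD''
        obtain ⟨D1, ⟨x, hx⟩, D2, hD2, hDsum⟩ := hD''
        obtain ⟨a, rfl⟩ := Submodule.mem_span_singleton.mp hD2
        obtain ⟨c, rfl⟩ := Submodule.mem_span_singleton.mp hD
        obtain ⟨_, hc⟩ := hdis x (-a) c (fun y => by
          have := congrArg (fun (Z : LieDerivation ℂ L L) => Z y) hDsum
          simp only [LieDerivation.add_apply, LieDerivation.smul_apply] at this
          rw [neg_smul, ← hx y]
          linear_combination (norm := module) -this)
        rw [hc, zero_smul]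
    · -- iSup equals top
      rw [eq_top_iff]
      intro D _
      obtain ⟨D₀, a, s, hD₀, hDeq⟩ := hmem D
      rw [hDeq]
      refine add_mem (add_mem ?_ ?_) ?_
      · exact le_iSup ![innerDerivations L, Submodule.span ℂ {dAb},
          Submodule.span ℂ {dlam}] 0 hD₀
      · exact le_iSup ![innerDerivations L, Submodule.span ℂ {dAb},
          Submodule.span ℂ {dlam}] 1
          (Submodule.smul_mem _ a (Submodule.mem_span_singleton_self dAb))
      · exact le_iSup ![innerDerivations L, Submodule.span ℂ {dAb},
          Submodule.span ℂ {dlam}] 2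
          (Submodule.smul_mem _ s (Submodule.mem_span_singleton_self dlam))
  · -- finrank of quotient
    have hcompl : IsCompl (innerDerivations L)
        (Submodule.span ℂ {dAb} ⊔ Submodule.span ℂ {dlam}) :=
      ⟨hdisj, codisjoint_iff.mpr hsup⟩
    have hequiv := Submodule.quotientEquivOfIsCompl _ _ hcompl
    rw [LinearEquiv.finrank_eq hequiv]
    have hrange : Set.range ![dAb, dlam] = {dAb, dlam} := by
      ext z
      constructor
      · rintro ⟨i, rfl⟩
        fin_cases i
        · exact Or.inl rfl
        · exact Or.inr rfl
      · rintro (rfl | rfl)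
        · exact ⟨0, rfl⟩
        · exact ⟨1, rfl⟩
    have hspan : Submodule.span ℂ {dAb} ⊔ Submodule.span ℂ {dlam}
        = Submodule.span ℂ (Set.range ![dAb, dlam]) := by
      rw [hrange, ← Submodule.span_union, Set.singleton_union]
    have hli : LinearIndependent ℂ ![dAb, dlam] := by
      rw [LinearIndependent.pair_iff]
      intro p q hpq
      have h1 := congrArg (fun (Z : LieDerivation ℂ L L) => Z (b (Sum.inr 0))) hpq
      have h2 := congrArg (fun (Z : LieDerivation ℂ L L) => Z (b (Sum.inl 1))) hpq
      simp only [LieDerivation.add_apply, LieDerivation.smul_apply] at h1 h2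
      rw [hAb2, hdlam2, smul_zero, add_zero] at h1
      rw [hAb1, hdlam1, smul_zero, zero_add] at h2
      have hp : p = 0 := by
        rcases smul_eq_zero.mp h1 with hp | hb
        · exact hp
        · exact absurd hb (b.ne_zero _)
      have hcoef : (if lam = some 0 then ((1 : ℤ) : ℂ) ^ 2 else ((1 : ℤ) : ℂ)) = 1 := by
        split_ifs <;> norm_num
      rw [hcoef, one_smul] at h2
      have hq : q = 0 := by
        rcases smul_eq_zero.mp h2 with hq | hb
        · exact hq
        · exact absurd hb (b.ne_zero _)
      exact ⟨hp, hq⟩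
    rw [hspan, finrank_span_eq_card hli]
    simp
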